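/- Let P₁, …, Pₙ be projection-valued measures, Pᵢ on (Λᵢ, Fᵢ), all with values in L(H), and fix a subtuple 1 ≤ i₁ < ⋯ < i_k ≤ n. Suppose Q, defined on the product algebra on Λ₁ × ⋯ × Λₙ, and R, defined on the product algebra on Λ_{i₁} × ⋯ × Λ_{i_k}, are finitely additive L(H)-valued measures such that Q(B₁ × ⋯ × Bₙ) = (1/n!)·{P₁(B₁)·…·Pₙ(Bₙ)}_sym for all rectangles with Bᵢ ∈ Fᵢ, and R(B_{i₁} × ⋯ × B_{i_k}) = (1/k!)·{P_{i₁}(B_{i₁})·…·P_{i_k}(B_{i_k})}_sym for all rectangles with B_{i_j} ∈ F_{i_j}. Then for every F in the product algebra on Λ_{i₁} × ⋯ × Λ_{i_k}, Q({(x₁,…,xₙ) ∈ Λ₁ × ⋯ × Λₙ : (x_{i₁},…,x_{i_k}) ∈ F}) = R(F). -/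

import Mathlib

open scoped BigOperators

/-- An algebra of subsets of a set `α`. -/
structure SetAlgebra (α : Type*) where
  sets : Set (Set α)
  univ_mem : Set.univ ∈ sets
  compl_mem : ∀ ⦃s : Set α⦄, s ∈ sets → sᶜ ∈ sets
  union_mem : ∀ ⦃s t : Set α⦄, s ∈ sets → t ∈ sets → s ∪ t ∈ sets

/-- A projection-valued measure on `(Λ, F)` with values in the bounded operators on `H`. -/
structure PVM (H : Type*) [NormedAddCommGroup H] [InnerProductSpace ℂ H]
    [CompleteSpace H] {Λ : Type*} (F : SetAlgebra Λ) where
  toFun : Set Λ → (H →L[ℂ] H)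
  isSelfAdjoint_of_mem : ∀ ⦃B : Set Λ⦄, B ∈ F.sets → IsSelfAdjoint (toFun B)
  idem_of_mem : ∀ ⦃B : Set Λ⦄, B ∈ F.sets → toFun B * toFun B = toFun B
  map_univ : toFun Set.univ = 1
  map_empty : toFun ∅ = 0
  map_union : ∀ ⦃B₁ B₂ : Set Λ⦄, B₁ ∈ F.sets → B₂ ∈ F.sets → Disjoint B₁ B₂ →
    toFun (B₁ ∪ B₂) = toFun B₁ + toFun B₂
  map_inter : ∀ ⦃B₁ B₂ : Set Λ⦄, B₁ ∈ F.sets → B₂ ∈ F.sets →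
    toFun (B₁ ∩ B₂) = toFun B₁ * toFun B₂

/-- The symmetrized product `{Z₁ ⋯ Zₙ}_sym`: the sum over all permutations `σ` of
the ordered operator products `Z_{σ(1)} ⋯ Z_{σ(n)}`. -/
noncomputable def symProd {H : Type*} [NormedAddCommGroup H] [InnerProductSpace ℂ H]
    [CompleteSpace H] {n : ℕ} (Z : Fin n → (H →L[ℂ] H)) : H →L[ℂ] H :=
  ∑ σ : Equiv.Perm (Fin n), (List.ofFn fun i => Z (σ i)).prod

/-- The algebra of subsets of `α` generated by a collection `G` of subsets:
the smallest collection containing `G` and `univ` and closed under complements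
and finite unions. -/
inductive GenAlg {α : Type*} (G : Set (Set α)) : Set α → Prop
  | basic {s : Set α} : s ∈ G → GenAlg G s
  | univ : GenAlg G Set.univ
  | compl {s : Set α} : GenAlg G s → GenAlg G sᶜ
  | union {s t : Set α} : GenAlg G s → GenAlg G t → GenAlg G (s ∪ t)

/-- The product algebra on `Π i, Λ i`: the algebra of subsets generated by the
rectangles `B₁ × ⋯ × Bₙ` with measurable sides `Bᵢ ∈ Fᵢ`. -/
def prodAlgebra {ι : Type*} {Λ : ι → Type*} (F : ∀ i, SetAlgebra (Λ i)) :
    Set (Set (∀ i, Λ i)) :=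
  {S | GenAlg {R | ∃ B : ∀ i, Set (Λ i), (∀ i, B i ∈ (F i).sets) ∧ R = Set.univ.pi B} S}


section AuxSym

variable {A : Type*} [Ring A]

private lemma ofFn_prod_eq_of_one' : ∀ {n : ℕ} (j : Fin (n+1)) (g : Fin (n+1) → A), g j = 1 →
    (List.ofFn g).prod = (List.ofFn (g ∘ j.succAbove)).prod := by
  intro n
  induction n with
  | zero =>
    intro j g hg
    have : j = 0 := Fin.fin_one_eq_zero j
    subst this
    simp [List.ofFn_succ, hg]
  | succ n ih =>
    intro j g hg
    refine Fin.cases ?_ ?_ j hg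
    · intro hg0
      simp [List.ofFn_succ, hg0, Fin.succAbove_zero, Function.comp]
    · intro j' hg'
      have h1 : (List.ofFn (g ∘ (j'.succ).succAbove)) =
          g 0 :: List.ofFn ((fun i => g i.succ) ∘ j'.succAbove) := by
        rw [List.ofFn_succ]
        simp only [Function.comp, Fin.succ_succAbove_zero]
        have : (fun i => g (j'.succ.succAbove i.succ)) = (fun i => g i.succ) ∘ j'.succAbove := by
          funext i
          simp [Function.comp, Fin.succ_succAbove_succ]
        rw [this]
      rw [h1, List.ofFn_succ, List.prod_cons, List.prod_cons,
        ih j' (fun i => g i.succ) (by simpa using hg')]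

/-- generic symmetrized sum -/
private noncomputable def sp {n : ℕ} (Z : Fin n → A) : A :=
  ∑ σ : Equiv.Perm (Fin n), (List.ofFn fun i => Z (σ i)).prod

private lemma sp_comp_equiv {m n : ℕ} (e : Fin m ≃ Fin n) (Z : Fin n → A) :
    sp (Z ∘ e) = sp Z := by
  obtain rfl : m = n := by simpa using Fintype.card_congr e
  unfold sp
  exact Fintype.sum_equiv (Equiv.mulLeft e) _ _ fun σ => rfl

private lemma sp_succAbove {n : ℕ} (Z : Fin (n+1) → A) (q : Fin (n+1)) (hq : Z q = 1) :
    sp Z = (n+1) • sp (Z ∘ q.succAbove) := by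
  classical
  set e : Fin (n+1) × Equiv.Perm (Fin n) → Equiv.Perm (Fin (n+1)) :=
    fun p => (finSuccEquiv' p.1).trans ((Equiv.optionCongr p.2).trans (finSuccEquiv' q).symm)
    with he
  have he_fst : ∀ p, e p p.1 = q := by
    intro p
    simp [he, finSuccEquiv'_at, finSuccEquiv'_symm_none]
  have he_succ : ∀ p m, e p (p.1.succAbove m) = q.succAbove (p.2 m) := by
    intro p m
    simp [he, finSuccEquiv'_succAbove, finSuccEquiv'_symm_some]
  have hinj : Function.Injective e := by
    rintro ⟨j, τ⟩ ⟨j', τ'⟩ h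
    have hj : j = j' := by
      have h1 : e (j, τ) j = q := he_fst (j, τ)
      have h2 : e (j, τ) j' = q := by rw [h]; exact he_fst (j', τ')
      exact (e (j, τ)).injective (h1.trans h2.symm)
    subst hj
    have hτ : τ = τ' := by
      refine Equiv.ext fun m => ?_
      have h1 : q.succAbove (τ m) = q.succAbove (τ' m) := by
        rw [← he_succ (j, τ) m, ← he_succ (j, τ') m, h]
      exact Fin.succAbove_right_injective h1
    rw [hτ]
  have hbij : Function.Bijective e := by
    refine (Fintype.bijective_iff_injective_and_card e).2 ⟨hinj, ?_⟩
    simp [Fintype.card_perm, Nat.factorial_succ]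
  unfold sp
  rw [← Fintype.sum_bijective e hbij
      (fun p => (List.ofFn fun i => Z (e p i)).prod)
      (fun σ => (List.ofFn fun i => Z (σ i)).prod) (fun p => rfl)]
  rw [Fintype.sum_prod_type]
  have : ∀ (j : Fin (n+1)) (τ : Equiv.Perm (Fin n)),
      (List.ofFn fun i => Z (e (j, τ) i)).prod
        = (List.ofFn fun m => (Z ∘ q.succAbove) (τ m)).prod := by
    intro j τ
    have h0 : e (j, τ) j = q := he_fst (j, τ)
    have h1 : (fun i => Z (e (j, τ) i)) j = 1 := by simp only [h0]; exact hq
    rw [ofFn_prod_eq_of_one' j _ h1]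
    have h3 : ((fun i => Z (e (j, τ) i)) ∘ j.succAbove) = fun m => (Z ∘ q.succAbove) (τ m) := by
      funext m
      have h2 : e (j, τ) (j.succAbove m) = q.succAbove (τ m) := he_succ (j, τ) m
      simp [Function.comp, h2]
    rw [h3]
  simp_rw [this]
  rw [Finset.sum_const, Finset.card_univ, Fintype.card_fin]

private lemma sp_subtuple : ∀ {n : ℕ} {k : ℕ} (ι : Fin k → Fin n), Function.Injective ι →
    ∀ (Z : Fin n → A), (∀ i, i ∉ Set.range ι → Z i = 1) →
    sp Z = (n.factorial / k.factorial) • sp (Z ∘ ι) := by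
  intro n
  induction n with
  | zero =>
    intro k ι hι Z hZ
    have hk : k = 0 := by
      cases k with
      | zero => rfl
      | succ k => exact (ι 0).elim0
    subst hk
    have : Z ∘ ι = Z := by funext i; exact i.elim0
    rw [this]
    simp
  | succ n ih =>
    intro k ι hι Z hZ
    by_cases hsurj : Function.Surjective ι
    · have e : Fin k ≃ Fin (n+1) := Equiv.ofBijective ι ⟨hι, hsurj⟩
      have hk : k = n + 1 := by simpa using Fintype.card_congr e
      have h1 : sp (Z ∘ ι) = sp Z := by
        have : Z ∘ ι = Z ∘ (Equiv.ofBijective ι ⟨hι, hsurj⟩) := rfl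
        rw [this, sp_comp_equiv]
      rw [h1, hk, Nat.div_self (Nat.factorial_pos _), one_smul]
    · obtain ⟨q, hq⟩ := not_forall.1 hsurj
      push_neg at hq
      have hqr : q ∉ Set.range ι := by rintro ⟨j, rfl⟩; exact hq j rfl
      have hZq : Z q = 1 := hZ q hqr
      have hex : ∀ j, ∃ m, q.succAbove m = ι j := fun j =>
        Fin.exists_succAbove_eq (fun h => hqr ⟨j, h⟩)
      set ι' : Fin k → Fin n := fun j => (hex j).choose with hι'def
      have hspec : ∀ j, q.succAbove (ι' j) = ι j := fun j => (hex j).choose_spec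
      have hι'inj : Function.Injective ι' := by
        intro j j' h
        apply hι
        rw [← hspec j, ← hspec j', h]
      have hk : k ≤ n := Fintype.card_fin k ▸ Fintype.card_fin n ▸
        Fintype.card_le_of_injective ι' hι'inj
      have hZ' : ∀ m, m ∉ Set.range ι' → (Z ∘ q.succAbove) m = 1 := by
        intro m hm
        apply hZ
        rintro ⟨j, hj⟩
        have h2 : q.succAbove (ι' j) = q.succAbove m := by rw [hspec j, hj]
        exact hm ⟨j, Fin.succAbove_right_injective h2⟩
      have hcomp : (Z ∘ q.succAbove) ∘ ι' = Z ∘ ι := by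
        funext j
        simp [Function.comp, hspec j]
      rw [sp_succAbove Z q hZq, ih ι' hι'inj _ hZ', hcomp, smul_smul,
        Nat.factorial_succ, Nat.mul_div_assoc (n+1) (Nat.factorial_dvd_factorial hk)]

end AuxSym

private lemma symProd_eq_sp {H : Type*} [NormedAddCommGroup H] [InnerProductSpace ℂ H]
    [CompleteSpace H] {n : ℕ} (Z : Fin n → (H →L[ℂ] H)) : symProd Z = sp Z := rfl

private lemma symProd_subtuple {H : Type*} [NormedAddCommGroup H] [InnerProductSpace ℂ H]
    [CompleteSpace H] {n k : ℕ} (ι : Fin k → Fin n) (hι : Function.Injective ι)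
    (Z : Fin n → (H →L[ℂ] H)) (hZ : ∀ i, i ∉ Set.range ι → Z i = 1) :
    ((n.factorial : ℂ))⁻¹ • symProd Z = ((k.factorial : ℂ))⁻¹ • symProd (Z ∘ ι) := by
  have hk : k ≤ n := Fintype.card_fin k ▸ Fintype.card_fin n ▸
    Fintype.card_le_of_injective ι hι
  rw [symProd_eq_sp, symProd_eq_sp, sp_subtuple ι hι Z hZ,
    ← Nat.cast_smul_eq_nsmul ℂ, smul_smul]
  congr 1
  have hdvd : k.factorial ∣ n.factorial := Nat.factorial_dvd_factorial hk
  have hkne : (k.factorial : ℂ) ≠ 0 := Nat.cast_ne_zero.2 (Nat.factorial_ne_zero k)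
  have hnne : (n.factorial : ℂ) ≠ 0 := Nat.cast_ne_zero.2 (Nat.factorial_ne_zero n)
  rw [Nat.cast_div hdvd hkne]
  rw [mul_div_assoc']
  field_simp

section AuxAlg

variable {α : Type*}

private def unionList (L : List (Set α)) : Set α := L.foldr (· ∪ ·) ∅

private lemma unionList_nil : unionList ([] : List (Set α)) = ∅ := rfl

private lemma unionList_cons (s : Set α) (L : List (Set α)) :
    unionList (s :: L) = s ∪ unionList L := rfl

private lemma unionList_append (L₁ L₂ : List (Set α)) :
    unionList (L₁ ++ L₂) = unionList L₁ ∪ unionList L₂ := by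
  induction L₁ with
  | nil => simp [unionList_nil, unionList]
  | cons s L ih => simp [unionList_cons, ih, Set.union_assoc]

private lemma mem_unionList {x : α} {L : List (Set α)} :
    x ∈ unionList L ↔ ∃ r ∈ L, x ∈ r := by
  induction L with
  | nil => simp [unionList_nil]
  | cons s L ih => simp [unionList_cons, ih]

private lemma unionList_map_inter (r : Set α) (L : List (Set α)) :
    unionList (L.map (fun t => r ∩ t)) = r ∩ unionList L := by
  induction L with
  | nil => simp [unionList_nil]
  | cons s L ih => simp [unionList_cons, ih, Set.inter_union_distrib_left]

private lemma unionList_bind_inter (L₁ L₂ : List (Set α)) :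
    unionList (L₁.flatMap fun s => L₂.map (fun t => s ∩ t)) = unionList L₁ ∩ unionList L₂ := by
  induction L₁ with
  | nil => simp [unionList_nil]
  | cons s L ih =>
    simp only [List.flatMap_cons, unionList_append, unionList_cons, ih, unionList_map_inter]
    rw [Set.union_inter_distrib_right]

private lemma GenAlg.inter {G : Set (Set α)} {s t : Set α} (hs : GenAlg G s)
    (ht : GenAlg G t) : GenAlg G (s ∩ t) := by
  have h := (hs.compl.union ht.compl).compl
  simpa [Set.compl_union] using h

private lemma GenAlg.empty {G : Set (Set α)} : GenAlg G (∅ : Set α) := by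
  have h := GenAlg.univ (G := G) |>.compl
  simpa using h

private lemma genAlg_unionList {G : Set (Set α)} {L : List (Set α)}
    (h : ∀ r ∈ L, r ∈ G) : GenAlg G (unionList L) := by
  induction L with
  | nil => exact GenAlg.empty
  | cons s L ih =>
    rw [unionList_cons]
    exact (GenAlg.basic (h s (by simp))).union (ih fun r hr => h r (by simp [hr]))

/-- Every element of the generated algebra is a finite union of basic sets,
provided the basic sets are closed under intersection and contain `univ`, and
complements of basic sets are finite unions of basic sets. -/
private lemma genAlg_eq_unionList {G : Set (Set α)}
    (hG_inter : ∀ ⦃s t : Set α⦄, s ∈ G → t ∈ G → s ∩ t ∈ G)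
    (hG_univ : Set.univ ∈ G)
    (hG_compl : ∀ s ∈ G, ∃ L : List (Set α), (∀ r ∈ L, r ∈ G) ∧ sᶜ = unionList L) :
    ∀ s : Set α, GenAlg G s → ∃ L : List (Set α), (∀ r ∈ L, r ∈ G) ∧ s = unionList L := by
  intro s hs
  induction hs with
  | @basic s hsG => exact ⟨[s], by simpa using hsG, by simp [unionList_cons, unionList_nil]⟩
  | univ => exact ⟨[Set.univ], by simpa using hG_univ, by simp [unionList_cons, unionList_nil]⟩
  | @compl s _ ihs =>
    obtain ⟨L, hL, rfl⟩ := ihs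
    clear* - hG_inter hG_compl hG_univ hL
    induction L with
    | nil =>
      refine ⟨[Set.univ], by simpa using hG_univ, ?_⟩
      simp [unionList_nil, unionList_cons]
    | cons r L ih =>
      obtain ⟨L₁, hL₁, hL₁eq⟩ := hG_compl r (hL r (by simp))
      obtain ⟨L₂, hL₂, hL₂eq⟩ := ih fun t ht => hL t (by simp [ht])
      refine ⟨L₁.flatMap fun s => L₂.map (fun t => s ∩ t), ?_, ?_⟩
      · intro u hu
        rw [List.mem_flatMap] at hu
        obtain ⟨a, ha, hu⟩ := hu
        rw [List.mem_map] at hu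
        obtain ⟨b, hb, rfl⟩ := hu
        exact hG_inter (hL₁ a ha) (hL₂ b hb)
      · rw [unionList_bind_inter, ← hL₁eq, ← hL₂eq, unionList_cons, Set.compl_union]
  | @union s t _ _ ihs iht =>
    obtain ⟨L₁, hL₁, rfl⟩ := ihs
    obtain ⟨L₂, hL₂, rfl⟩ := iht
    refine ⟨L₁ ++ L₂, ?_, (unionList_append L₁ L₂).symm⟩
    intro r hr
    rcases List.mem_append.1 hr with h | h
    · exact hL₁ r h
    · exact hL₂ r h

/-- A finitely additive measure (relative to the generated algebra) vanishing on
basic sets vanishes on the whole generated algebra, provided the basic sets are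
closed under intersection etc. -/
private lemma genAlg_measure_zero {E : Type*} [AddCommGroup E] {G : Set (Set α)}
    (hG_inter : ∀ ⦃s t : Set α⦄, s ∈ G → t ∈ G → s ∩ t ∈ G)
    (hG_univ : Set.univ ∈ G)
    (hG_compl : ∀ s ∈ G, ∃ L : List (Set α), (∀ r ∈ L, r ∈ G) ∧ sᶜ = unionList L)
    (m : Set α → E)
    (hadd : ∀ ⦃s t : Set α⦄, GenAlg G s → GenAlg G t → Disjoint s t → m (s ∪ t) = m s + m t)
    (hbasic : ∀ s ∈ G, m s = 0) :
    ∀ s : Set α, GenAlg G s → m s = 0 := by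
  have hempty : m ∅ = 0 := by
    have h := hadd GenAlg.empty GenAlg.empty (disjoint_bot_left)
    simp only [Set.union_empty] at h
    exact (left_eq_add.1 h)
  -- inclusion-exclusion
  have hie : ∀ ⦃s t : Set α⦄, GenAlg G s → GenAlg G t →
      m (s ∪ t) = m s + m t - m (s ∩ t) := by
    intro s t hs ht
    have h1 : s ∪ t = s ∪ (t ∩ sᶜ) := by
      rw [Set.union_inter_distrib_left]
      simp [Set.union_comm]
    have h2 : m (s ∪ t) = m s + m (t ∩ sᶜ) := by
      rw [h1]
      exact hadd hs (ht.inter hs.compl)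
        ((disjoint_compl_right (a := s)).mono_right Set.inter_subset_right)
    have h3 : m t = m (t ∩ s) + m (t ∩ sᶜ) := by
      have := hadd (ht.inter hs) (ht.inter hs.compl)
        (Set.disjoint_of_subset Set.inter_subset_right Set.inter_subset_right
          disjoint_compl_right)
      rw [Set.inter_union_compl] at this
      exact this
    rw [h2, h3, Set.inter_comm s t]
    abel
  -- vanishing on finite unions of basic sets, by strong induction on length
  have hstrong : ∀ N : ℕ, ∀ L : List (Set α), L.length ≤ N → (∀ r ∈ L, r ∈ G) →
      m (unionList L) = 0 := by
    intro N
    induction N with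
    | zero =>
      intro L hL _
      rw [List.length_eq_zero_iff.1 (Nat.le_zero.1 hL)]
      exact hempty
    | succ N ih =>
      intro L hL hG
      cases L with
      | nil => exact hempty
      | cons r L' =>
        have hr : r ∈ G := hG r (by simp)
        have hL' : ∀ t ∈ L', t ∈ G := fun t ht => hG t (by simp [ht])
        have hlen : L'.length ≤ N := by simpa using hL
        have hgr : GenAlg G r := GenAlg.basic hr
        have hgL' : GenAlg G (unionList L') := genAlg_unionList hL'
        rw [unionList_cons, hie hgr hgL', hbasic r hr, ih L' hlen hL',
          ← unionList_map_inter, ih (L'.map (fun t => r ∩ t)) (by simpa using hlen)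
            (by
              intro u hu
              rw [List.mem_map] at hu
              obtain ⟨b, hb, rfl⟩ := hu
              exact hG_inter hr (hL' b hb))]
        abel
  intro s hs
  obtain ⟨L, hLG, rfl⟩ := genAlg_eq_unionList hG_inter hG_univ hG_compl s hs
  exact hstrong L.length L le_rfl hLG
end AuxAlg


private lemma SetAlgebra.inter_mem {γ : Type*} (FA : SetAlgebra γ) {s t : Set γ}
    (hs : s ∈ FA.sets) (ht : t ∈ FA.sets) : s ∩ t ∈ FA.sets := by
  have h := FA.compl_mem (FA.union_mem (FA.compl_mem hs) (FA.compl_mem ht))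
  simpa [Set.compl_union] using h

private lemma SetAlgebra.empty_mem {γ : Type*} (FA : SetAlgebra γ) : (∅ : Set γ) ∈ FA.sets := by
  have h := FA.compl_mem FA.univ_mem
  simpa using h

/-- If `Q` is a finitely additive operator-valued measure on the product
algebra on `Λ₁ × ⋯ × Λₙ` given on rectangles by `(1/n!)·{P₁(B₁)⋯Pₙ(Bₙ)}_sym`, and `R` on the
product algebra of the subtuple `Λ_{i₁} × ⋯ × Λ_{i_k}` given on rectangles by
`(1/k!)·{P_{i₁}(B_{i₁})⋯P_{i_k}(B_{i_k})}_sym`, then for every `F` in the subtuple product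
algebra, `Q` of the cylinder over `F` equals `R F`. -/
theorem prodMeasure_marginal
    {H : Type*} [NormedAddCommGroup H] [InnerProductSpace ℂ H] [CompleteSpace H]
    {n k : ℕ} {Λ : Fin n → Type*} {F : ∀ i, SetAlgebra (Λ i)}
    (P : ∀ i, PVM H (F i))
    (ι : Fin k → Fin n) (hι : StrictMono ι)
    (Q : Set (∀ i, Λ i) → (H →L[ℂ] H))
    (R : Set (∀ j : Fin k, Λ (ι j)) → (H →L[ℂ] H))
    (hQadd : ∀ ⦃A B : Set (∀ i, Λ i)⦄, A ∈ prodAlgebra F → B ∈ prodAlgebra F →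
      Disjoint A B → Q (A ∪ B) = Q A + Q B)
    (hRadd : ∀ ⦃A B : Set (∀ j : Fin k, Λ (ι j))⦄,
      A ∈ prodAlgebra (fun j => F (ι j)) → B ∈ prodAlgebra (fun j => F (ι j)) →
      Disjoint A B → R (A ∪ B) = R A + R B)
    (hQ : ∀ (B : ∀ i, Set (Λ i)), (∀ i, B i ∈ (F i).sets) →
      Q (Set.univ.pi B) = (n.factorial : ℂ)⁻¹ • symProd (fun i => (P i).toFun (B i)))
    (hR : ∀ (B : ∀ j : Fin k, Set (Λ (ι j))), (∀ j, B j ∈ (F (ι j)).sets) →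
      R (Set.univ.pi B) = (k.factorial : ℂ)⁻¹ • symProd (fun j => (P (ι j)).toFun (B j)))
    (Fs : Set (∀ j : Fin k, Λ (ι j))) (hFs : Fs ∈ prodAlgebra (fun j => F (ι j))) :
    Q {x : ∀ i, Λ i | (fun j => x (ι j)) ∈ Fs} = R Fs := by
  classical
  have hinj : Function.Injective ι := hι.injective
  set proj : (∀ i, Λ i) → (∀ j : Fin k, Λ (ι j)) := fun x j => x (ι j) with hprojdef
  set G : Set (Set (∀ j : Fin k, Λ (ι j))) :=
    {S | ∃ B : ∀ j, Set (Λ (ι j)), (∀ j, B j ∈ (F (ι j)).sets) ∧ S = Set.univ.pi B} with hGdef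
  -- cylinders over rectangles are rectangles
  have hcyl_rect : ∀ (B : ∀ j, Set (Λ (ι j))), (∀ j, B j ∈ (F (ι j)).sets) →
      ∃ B' : ∀ i, Set (Λ i), (∀ i, B' i ∈ (F i).sets) ∧
        proj ⁻¹' (Set.univ.pi B) = Set.univ.pi B' ∧
        (∀ j, B' (ι j) = B j) ∧ (∀ i, i ∉ Set.range ι → B' i = Set.univ) := by
    intro B hB
    refine ⟨fun i => {y : Λ i | ∀ (j : Fin k) (h : ι j = i), y ∈ (h ▸ B j : Set (Λ i))},
      ?_, ?_, ?_, ?_⟩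
    case refine_3 =>
      intro j₀
      ext y
      constructor
      · intro hy
        exact hy j₀ rfl
      · intro hy j h
        obtain rfl : j = j₀ := hinj h
        exact hy
    case refine_4 =>
      intro i hi
      refine Set.eq_univ_of_forall fun y j h => absurd ⟨j, h⟩ hi
    case refine_1 =>
      intro i
      by_cases hi : ∃ j, ι j = i
      · obtain ⟨j, rfl⟩ := hi
        have heq : {y : Λ (ι j) | ∀ (j' : Fin k) (h : ι j' = ι j),
            y ∈ (h ▸ B j' : Set (Λ (ι j)))} = B j := by
          ext y
          constructor
          · intro hy
            exact hy j rfl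
          · intro hy j' h
            obtain rfl : j' = j := hinj h
            exact hy
        simpa only [heq] using hB j
      · have heq : {y : Λ i | ∀ (j : Fin k) (h : ι j = i),
            y ∈ (h ▸ B j : Set (Λ i))} = Set.univ :=
          Set.eq_univ_of_forall fun y j h => absurd ⟨j, h⟩ hi
        simpa only [heq] using (F i).univ_mem
    case refine_2 =>
      ext x
      simp only [Set.mem_preimage, Set.mem_univ_pi, Set.mem_setOf_eq]
      constructor
      · intro hx i j h
        subst h
        exact hx j
      · intro hx j
        exact hx (ι j) j rfl
  -- cylinders over the generated algebra lie in the big product algebra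
  have hcylmem : ∀ s, GenAlg G s → (proj ⁻¹' s) ∈ prodAlgebra F := by
    intro s hs
    induction hs with
    | @basic s h =>
      obtain ⟨B, hB, rfl⟩ := h
      obtain ⟨B', hB', hpre, _, _⟩ := hcyl_rect B hB
      rw [hpre]
      exact GenAlg.basic ⟨B', hB', rfl⟩
    | univ =>
      rw [Set.preimage_univ]
      exact GenAlg.univ
    | @compl s _ ih =>
      rw [Set.preimage_compl]
      exact ih.compl
    | @union s t _ _ ih1 ih2 =>
      rw [Set.preimage_union]
      exact ih1.union ih2
  -- the signed measure
  set m : Set (∀ j : Fin k, Λ (ι j)) → (H →L[ℂ] H) := fun s => Q (proj ⁻¹' s) - R s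
    with hmdef
  have hadd : ∀ ⦃s t : Set (∀ j : Fin k, Λ (ι j))⦄, GenAlg G s → GenAlg G t →
      Disjoint s t → m (s ∪ t) = m s + m t := by
    intro s t hs ht hst
    have h1 : Q (proj ⁻¹' (s ∪ t)) = Q (proj ⁻¹' s) + Q (proj ⁻¹' t) := by
      rw [Set.preimage_union]
      exact hQadd (hcylmem s hs) (hcylmem t ht) (hst.preimage proj)
    have h2 : R (s ∪ t) = R s + R t := hRadd hs ht hst
    simp only [hmdef, h1, h2]
    abel
  have hG_univ : Set.univ ∈ G :=
    ⟨fun j => Set.univ, fun j => (F (ι j)).univ_mem, by simp⟩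
  have hG_inter : ∀ ⦃s t : Set (∀ j : Fin k, Λ (ι j))⦄, s ∈ G → t ∈ G → s ∩ t ∈ G := by
    rintro s t ⟨B₁, hB₁, rfl⟩ ⟨B₂, hB₂, rfl⟩
    exact ⟨fun j => B₁ j ∩ B₂ j, fun j => (F (ι j)).inter_mem (hB₁ j) (hB₂ j),
      (Set.pi_inter_distrib).symm⟩
  have hG_compl : ∀ s ∈ G, ∃ L : List (Set (∀ j : Fin k, Λ (ι j))),
      (∀ r ∈ L, r ∈ G) ∧ sᶜ = unionList L := by
    rintro s ⟨B, hB, rfl⟩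
    refine ⟨List.ofFn (fun j : Fin k => Set.univ.pi
      (Function.update (fun j' => (Set.univ : Set (Λ (ι j')))) j ((B j)ᶜ))), ?_, ?_⟩
    · intro r hr
      rw [List.mem_ofFn] at hr
      obtain ⟨j, rfl⟩ := hr
      refine ⟨_, ?_, rfl⟩
      intro j'
      by_cases hj : j' = j
      · subst hj
        rw [Function.update_self]
        exact (F (ι j')).compl_mem (hB j')
      · rw [Function.update_of_ne hj]
        exact (F (ι j')).univ_mem
    · ext x
      simp only [Set.mem_compl_iff, Set.mem_univ_pi, not_forall, mem_unionList,
        List.mem_ofFn]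
      constructor
      · rintro ⟨j, hj⟩
        refine ⟨_, ⟨j, rfl⟩, ?_⟩
        rw [Set.mem_univ_pi]
        intro j'
        by_cases h : j' = j
        · subst h
          rw [Function.update_self]
          exact hj
        · rw [Function.update_of_ne h]
          trivial
      · rintro ⟨r, ⟨j, rfl⟩, hx⟩
        rw [Set.mem_univ_pi] at hx
        refine ⟨j, ?_⟩
        have := hx j
        rwa [Function.update_self] at this
  have hbasic : ∀ s ∈ G, m s = 0 := by
    rintro s ⟨B, hB, rfl⟩
    obtain ⟨B', hB', hpre, hBeq, hBuniv⟩ := hcyl_rect B hB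
    have hZone : ∀ i, i ∉ Set.range ι → (fun i => (P i).toFun (B' i)) i = 1 := by
      intro i hi
      simp only
      rw [hBuniv i hi, (P i).map_univ]
    have hZι : (fun i => (P i).toFun (B' i)) ∘ ι = fun j => (P (ι j)).toFun (B j) := by
      funext j
      simp only [Function.comp]
      rw [hBeq j]
    have hsym := symProd_subtuple ι hinj (fun i => (P i).toFun (B' i)) hZone
    rw [hZι] at hsym
    simp only [hmdef]
    rw [hpre, hQ B' hB', hR B hB, hsym, sub_self]
  have hzero := genAlg_measure_zero hG_inter hG_univ hG_compl m hadd hbasic Fs hFs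
  have hz : Q (proj ⁻¹' Fs) - R Fs = 0 := hzero
  exact sub_eq_zero.1 hz
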